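/- As a corollary of the approximation scheme, for any continuous positive degree-p homogeneous H₀ : M × ℝ^k → ℝ (p > 1) and any ε ∈ (0,1) there exists a C¹ (in t) positive degree-p homogeneous H with (1−ε) H₀(x,t) ≤ H(x,t) ≤ (1+ε) H₀(x,t) for all (x,t) ∈ M × ℝ^k. -/

import Mathlib

open Metric Filter Asymptotics


lemma normPosSmul {k : ℕ} {l : ℝ} (hl : 0 < l) (t : EuclideanSpace ℝ (Fin k)) :
    ‖l • t‖ = l * ‖t‖ := by
  rw [norm_smul, Real.norm_eq_abs, abs_of_pos hl]

lemma homC1 {k : ℕ} {p : ℝ} (hp : 1 < p) (f : EuclideanSpace ℝ (Fin k) → ℝ)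
    (hsm : ContDiffOn ℝ 1 f {0}ᶜ)
    (hhom : ∀ l : ℝ, 0 < l → ∀ t, f (l • t) = l ^ p * f t) :
    ContDiff ℝ 1 f := by
  have hp0 : (0:ℝ) < p := lt_trans one_pos hp
  have h2 : (1:ℝ) < 2 ^ p :=
    (Real.one_lt_rpow_iff_of_pos (by norm_num)).mpr (Or.inl ⟨by norm_num, hp0⟩)
  have hf0 : f 0 = 0 := by
    have h := hhom 2 (by norm_num) 0
    rw [smul_zero] at h
    nlinarith
  have hne : ∀ {t : EuclideanSpace ℝ (Fin k)}, t ≠ 0 → DifferentiableAt ℝ f t := fun {t} ht =>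
    (hsm.contDiffAt ((isOpen_compl_singleton).mem_nhds ht)).differentiableAt one_ne_zero
  -- scaling of the derivative
  have hDscale : ∀ (l : ℝ), 0 < l → ∀ t : EuclideanSpace ℝ (Fin k), t ≠ 0 →
      fderiv ℝ f (l • t) = (l ^ (p - 1)) • fderiv ℝ f t := by
    intro l hl t ht
    have hlt : l • t ≠ 0 := smul_ne_zero (ne_of_gt hl) ht
    have h1 : HasFDerivAt (fun u => f (l • u))
        ((fderiv ℝ f (l • t)).comp (l • ContinuousLinearMap.id ℝ _)) t :=
      (hne hlt).hasFDerivAt.comp t ((hasFDerivAt_id t).const_smul l)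
    have h2' : HasFDerivAt (fun u => f (l • u)) ((l ^ p) • fderiv ℝ f t) t := by
      have he : (fun u : EuclideanSpace ℝ (Fin k) => f (l • u)) = fun u => l ^ p * f u :=
        funext (hhom l hl)
      rw [he]
      exact (hne ht).hasFDerivAt.const_mul _
    have heq := h1.unique h2'
    ext v
    have hv := DFunLike.congr_fun heq v
    simp only [ContinuousLinearMap.coe_comp', Function.comp_apply,
      ContinuousLinearMap.smul_apply, ContinuousLinearMap.coe_smul',
      ContinuousLinearMap.coe_id', Pi.smul_apply, id_eq, smul_eq_mul] at hv ⊢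
    have hmap : fderiv ℝ f (l • t) (l • v) = l * fderiv ℝ f (l • t) v := by
      rw [map_smul]; simp [smul_eq_mul]
    rw [hmap] at hv
    have hlp : l ^ (p - 1) = l ^ p / l := by
      rw [Real.rpow_sub hl, Real.rpow_one]
    rw [hlp]
    field_simp at hv ⊢
    linarith
  -- bounds on sphere
  have hsub : sphere (0 : EuclideanSpace ℝ (Fin k)) 1 ⊆ {0}ᶜ := by
    intro s hs
    simp only [mem_sphere_iff_norm, sub_zero] at hs
    simp only [Set.mem_compl_iff, Set.mem_singleton_iff]
    intro h0
    rw [h0, norm_zero] at hs; norm_num at hs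
  have contD : ContinuousOn (fderiv ℝ f) {0}ᶜ :=
    hsm.continuousOn_fderiv_of_isOpen isOpen_compl_singleton le_rfl
  obtain ⟨C, hC⟩ := (isCompact_sphere (0 : EuclideanSpace ℝ (Fin k)) 1).exists_bound_of_continuousOn
    (contD.mono hsub)
  obtain ⟨Cf, hCf⟩ := (isCompact_sphere (0 : EuclideanSpace ℝ (Fin k)) 1).exists_bound_of_continuousOn
    ((hsm.continuousOn).mono hsub)
  set C' := max C 0 with hC'
  set Cf' := max Cf 0 with hCf'
  have hC'0 : 0 ≤ C' := le_max_right _ _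
  have hCf'0 : 0 ≤ Cf' := le_max_right _ _
  have hsphere : ∀ t : EuclideanSpace ℝ (Fin k), t ≠ 0 → ‖t‖⁻¹ • t ∈ sphere (0 : EuclideanSpace ℝ (Fin k)) 1 := by
    intro t ht
    simp only [mem_sphere_iff_norm, sub_zero]
    exact norm_smul_inv_norm ht
  have hteq : ∀ t : EuclideanSpace ℝ (Fin k), t ≠ 0 → ‖t‖ • (‖t‖⁻¹ • t) = t := by
    intro t ht
    rw [smul_smul, mul_inv_cancel₀ (norm_ne_zero_iff.mpr ht), one_smul]
  -- value bound
  have hfb : ∀ t : EuclideanSpace ℝ (Fin k), ‖f t‖ ≤ Cf' * ‖t‖ ^ (p - 1) * ‖t‖ := by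
    intro t
    rcases eq_or_ne t 0 with rfl | ht
    · simp [hf0]
    · have hnt : (0:ℝ) < ‖t‖ := norm_pos_iff.mpr ht
      have hs := hsphere t ht
      have hval : f t = ‖t‖ ^ p * f (‖t‖⁻¹ • t) := by
        conv_lhs => rw [← hteq t ht]
        exact hhom ‖t‖ hnt _
      rw [hval]
      have hsplit : ‖t‖ ^ p = ‖t‖ ^ (p - 1) * ‖t‖ := by
        have h := Real.rpow_add hnt (p - 1) 1
        rw [Real.rpow_one, show p - 1 + 1 = p by ring] at h
        exact h
      rw [norm_mul, hsplit, Real.norm_eq_abs,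
        abs_of_nonneg (mul_nonneg (Real.rpow_nonneg (norm_nonneg t) _) (norm_nonneg t))]
      have h1 : ‖f (‖t‖⁻¹ • t)‖ ≤ Cf' := le_trans (hCf _ hs) (le_max_left _ _)
      calc ‖t‖ ^ (p - 1) * ‖t‖ * ‖f (‖t‖⁻¹ • t)‖
          ≤ ‖t‖ ^ (p - 1) * ‖t‖ * Cf' := by
            apply mul_le_mul_of_nonneg_left h1
            positivity
        _ = Cf' * ‖t‖ ^ (p - 1) * ‖t‖ := by ring
  -- tendsto of the bound
  have htend : Filter.Tendsto (fun t : EuclideanSpace ℝ (Fin k) => ‖t‖ ^ (p - 1)) (nhds 0) (nhds 0) := by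
    have h1 : Filter.Tendsto (fun t : EuclideanSpace ℝ (Fin k) => ‖t‖) (nhds 0) (nhds 0) := by
      simpa using (continuous_norm (E := EuclideanSpace ℝ (Fin k))).tendsto 0
    have h2 : ContinuousAt (fun x : ℝ => x ^ (p - 1)) 0 :=
      Real.continuousAt_rpow_const 0 (p - 1) (Or.inr (by linarith))
    have := h2.tendsto.comp h1
    rwa [Real.zero_rpow (by linarith : p - 1 ≠ 0)] at this
  -- derivative at 0
  have hd0 : HasFDerivAt f (0 : EuclideanSpace ℝ (Fin k) →L[ℝ] ℝ) 0 := by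
    rw [hasFDerivAt_iff_isLittleO_nhds_zero]
    simp only [zero_add, hf0, sub_zero, ContinuousLinearMap.zero_apply]
    rw [Asymptotics.isLittleO_iff]
    intro c hc
    have : ∀ᶠ t : EuclideanSpace ℝ (Fin k) in nhds 0, Cf' * ‖t‖ ^ (p - 1) < c := by
      have : Filter.Tendsto (fun t : EuclideanSpace ℝ (Fin k) => Cf' * ‖t‖ ^ (p - 1)) (nhds 0) (nhds 0) := by
        simpa using htend.const_mul Cf'
      exact this.eventually_lt_const hc
    filter_upwards [this] with t hct
    calc ‖f t‖ ≤ Cf' * ‖t‖ ^ (p - 1) * ‖t‖ := hfb t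
      _ ≤ c * ‖t‖ := mul_le_mul_of_nonneg_right (le_of_lt hct) (norm_nonneg t)
  have hfderiv0 : fderiv ℝ f 0 = 0 := hd0.fderiv
  -- derivative bound
  have hDb : ∀ t : EuclideanSpace ℝ (Fin k), ‖fderiv ℝ f t‖ ≤ C' * ‖t‖ ^ (p - 1) := by
    intro t
    rcases eq_or_ne t 0 with rfl | ht
    · rw [hfderiv0, norm_zero]
      positivity
    · have hnt : (0:ℝ) < ‖t‖ := norm_pos_iff.mpr ht
      have hs := hsphere t ht
      have hsne : ‖t‖⁻¹ • t ≠ 0 := hsub hs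
      have := hDscale ‖t‖ hnt _ hsne
      rw [hteq t ht] at this
      rw [this, norm_smul, Real.norm_eq_abs, abs_of_nonneg (Real.rpow_nonneg (norm_nonneg t) _)]
      rw [mul_comm C']
      exact mul_le_mul_of_nonneg_left (le_trans (hC _ hs) (le_max_left _ _))
        (Real.rpow_nonneg (norm_nonneg t) _)
  have hdiff : Differentiable ℝ f := by
    intro t
    rcases eq_or_ne t 0 with rfl | ht
    · exact hd0.differentiableAt
    · exact hne ht
  have hcontD : Continuous (fderiv ℝ f) := by
    rw [continuous_iff_continuousAt]
    intro t
    rcases eq_or_ne t 0 with rfl | ht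
    · rw [ContinuousAt, hfderiv0]
      apply squeeze_zero_norm hDb
      simpa using htend.const_mul C'
    · exact contD.continuousAt ((isOpen_compl_singleton).mem_nhds ht)
  exact contDiff_one_iff_fderiv.mpr ⟨hdiff, hcontD⟩


lemma sphere_norm_one {k : ℕ} (s : Metric.sphere (0 : EuclideanSpace ℝ (Fin k)) 1) :
    ‖(s : EuclideanSpace ℝ (Fin k))‖ = 1 := by
  have := s.prop
  rwa [mem_sphere_iff_norm, sub_zero] at this

lemma sphere_ne_zero {k : ℕ} (s : Metric.sphere (0 : EuclideanSpace ℝ (Fin k)) 1) :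
    (s : EuclideanSpace ℝ (Fin k)) ≠ 0 := by
  intro h
  have := sphere_norm_one s
  rw [h, norm_zero] at this; norm_num at this

noncomputable def niceA (k : ℕ) : Subalgebra ℝ C(Metric.sphere (0 : EuclideanSpace ℝ (Fin k)) 1, ℝ) where
  carrier := {g | ∃ G : EuclideanSpace ℝ (Fin k) → ℝ,
    ContDiffOn ℝ 1 G {0}ᶜ ∧ (∀ l : ℝ, 0 < l → ∀ t, G (l • t) = G t) ∧ ∀ s, g s = G ↑s}
  mul_mem' := by
    rintro a b ⟨Ga, hGa, hha, hra⟩ ⟨Gb, hGb, hhb, hrb⟩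
    exact ⟨fun t => Ga t * Gb t, hGa.mul hGb,
      fun l hl t => by simp only []; rw [hha l hl, hhb l hl],
      fun s => by simp [hra s, hrb s]⟩
  add_mem' := by
    rintro a b ⟨Ga, hGa, hha, hra⟩ ⟨Gb, hGb, hhb, hrb⟩
    exact ⟨fun t => Ga t + Gb t, hGa.add hGb,
      fun l hl t => by simp only []; rw [hha l hl, hhb l hl],
      fun s => by simp [hra s, hrb s]⟩
  one_mem' := ⟨fun _ => 1, contDiffOn_const, fun _ _ _ => rfl, fun s => rfl⟩
  zero_mem' := ⟨fun _ => 0, contDiffOn_const, fun _ _ _ => rfl, fun s => rfl⟩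
  algebraMap_mem' := fun c => ⟨fun _ => c, contDiffOn_const, fun _ _ _ => rfl, fun s => rfl⟩

lemma niceA_separates (k : ℕ) : (niceA k).SeparatesPoints := by
  intro x y hxy
  have hne : (x : EuclideanSpace ℝ (Fin k)) ≠ (y : EuclideanSpace ℝ (Fin k)) :=
    fun h => hxy (Subtype.ext h)
  have : ∃ j, (x : EuclideanSpace ℝ (Fin k)) j ≠ (y : EuclideanSpace ℝ (Fin k)) j := by
    by_contra h
    push_neg at h
    exact hne (PiLp.ext h)
  obtain ⟨j, hj⟩ := this
  refine ⟨fun s => (s : EuclideanSpace ℝ (Fin k)) j,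
    ⟨⟨fun s => (s : EuclideanSpace ℝ (Fin k)) j,
      ((EuclideanSpace.proj (𝕜 := ℝ) j).continuous.comp continuous_subtype_val)⟩,
      ⟨fun t => t j / ‖t‖, ?_, ?_, ?_⟩, rfl⟩, hj⟩
  · apply ContDiffOn.div
    · exact (EuclideanSpace.proj (𝕜 := ℝ) j).contDiff.contDiffOn
    · intro t ht
      exact (contDiffAt_id.norm ℝ ht).contDiffWithinAt
    · intro t ht
      exact norm_ne_zero_iff.mpr ht
  · intro l hl t
    show (l • t) j / ‖l • t‖ = t j / ‖t‖
    have h1 : (l • t) j = l * t j := rfl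
    rw [h1, norm_smul, Real.norm_eq_abs, abs_of_pos hl,
      mul_div_mul_left _ _ (ne_of_gt hl)]
  · intro s
    show (s : EuclideanSpace ℝ (Fin k)) j = (s : EuclideanSpace ℝ (Fin k)) j / ‖(s : EuclideanSpace ℝ (Fin k))‖
    rw [sphere_norm_one s, div_one]

set_option maxHeartbeats 1000000 in
lemma nice_dense {k : ℕ} (g : C(Metric.sphere (0 : EuclideanSpace ℝ (Fin k)) 1, ℝ))
    {δ : ℝ} (hδ : 0 < δ) :
    ∃ G : EuclideanSpace ℝ (Fin k) → ℝ,
      ContDiffOn ℝ 1 G {0}ᶜ ∧ (∀ l : ℝ, 0 < l → ∀ t, G (l • t) = G t) ∧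
      ∀ s : Metric.sphere (0 : EuclideanSpace ℝ (Fin k)) 1, |G ↑s - g s| < δ := by
  obtain ⟨a, ha⟩ := ContinuousMap.exists_mem_subalgebra_near_continuousMap_of_separatesPoints
    (niceA k) (niceA_separates k) g δ hδ
  have hmem : ↑a ∈ {g : C(Metric.sphere (0 : EuclideanSpace ℝ (Fin k)) 1, ℝ) |
      ∃ G : EuclideanSpace ℝ (Fin k) → ℝ,
      ContDiffOn ℝ 1 G {0}ᶜ ∧ (∀ l : ℝ, 0 < l → ∀ t, G (l • t) = G t) ∧ ∀ s, g s = G ↑s} := a.prop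
  obtain ⟨G, hG1, hG2, hG3⟩ := hmem
  refine ⟨G, hG1, hG2, fun s => ?_⟩
  have h2 := (ContinuousMap.norm_coe_le_norm ((a : C(Metric.sphere (0 : EuclideanSpace ℝ (Fin k)) 1, ℝ)) - g) s).trans_lt ha
  rw [ContinuousMap.sub_apply, Real.norm_eq_abs, hG3 s] at h2
  exact h2


set_option maxHeartbeats 2000000 in
theorem stmt8 (M : Type*) [TopologicalSpace M] [CompactSpace M]
    (k : ℕ) (hk : 1 ≤ k) (p : ℝ) (hp : 1 < p)
    (H0 : M × EuclideanSpace ℝ (Fin k) → ℝ)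
    (hcont : Continuous H0)
    (hpos : ∀ x t, t ≠ 0 → 0 < H0 (x, t))
    (hhom : ∀ (x : M) (l : ℝ), 0 < l → ∀ t, H0 (x, l • t) = l ^ p * H0 (x, t))
    (ε : ℝ) (hε : ε ∈ Set.Ioo (0 : ℝ) 1) :
    ∃ H : M × EuclideanSpace ℝ (Fin k) → ℝ,
      Continuous H ∧
      (∀ x t, t ≠ 0 → 0 < H (x, t)) ∧
      (∀ x : M, ContDiff ℝ 1 (fun t => H (x, t))) ∧
      (∀ (x : M) (l : ℝ), 0 < l → ∀ t, H (x, l • t) = l ^ p * H (x, t)) ∧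
      ∀ x t, (1 - ε) * H0 (x, t) ≤ H (x, t) ∧ H (x, t) ≤ (1 + ε) * H0 (x, t) := by
  obtain ⟨hε0, hε1⟩ := hε
  rcases isEmpty_or_nonempty M with hM | hM
  · exact ⟨fun _ => 0, continuous_const, fun x => (hM.false x).elim,
      fun x => (hM.false x).elim, fun x => (hM.false x).elim, fun x => (hM.false x).elim⟩
  have hp0 : (0:ℝ) < p := lt_trans one_pos hp
  have h2p : (1:ℝ) < 2 ^ p :=
    (Real.one_lt_rpow_iff_of_pos (by norm_num)).mpr (Or.inl ⟨by norm_num, hp0⟩)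
  have hH00 : ∀ x, H0 (x, 0) = 0 := by
    intro x
    have h := hhom x 2 (by norm_num) 0
    rw [smul_zero] at h
    nlinarith
  haveI : Nonempty (Fin k) := ⟨⟨0, hk⟩⟩
  have hs₀ : (EuclideanSpace.single (⟨0, hk⟩ : Fin k) (1:ℝ)) ∈
      sphere (0 : EuclideanSpace ℝ (Fin k)) 1 := by
    rw [mem_sphere_iff_norm, sub_zero, EuclideanSpace.norm_single]
    norm_num
  haveI : Nonempty (sphere (0 : EuclideanSpace ℝ (Fin k)) 1) := ⟨⟨_, hs₀⟩⟩
  -- the minimum on the sphere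
  set F : C(M × sphere (0 : EuclideanSpace ℝ (Fin k)) 1, ℝ) :=
    ⟨fun q => H0 (q.1, ↑q.2),
      hcont.comp (continuous_fst.prodMk (continuous_subtype_val.comp continuous_snd))⟩
    with hFdef
  obtain ⟨q₀, -, hq₀⟩ := isCompact_univ.exists_isMinOn Set.univ_nonempty F.continuous.continuousOn
  set m : ℝ := H0 (q₀.1, ↑q₀.2) with hmdef
  have hm : 0 < m := hpos _ _ (sphere_ne_zero q₀.2)
  have hmle : ∀ (x : M) (s : sphere (0 : EuclideanSpace ℝ (Fin k)) 1), m ≤ H0 (x, ↑s) :=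
    fun x s => isMinOn_iff.mp hq₀ (x, s) (Set.mem_univ _)
  set δ : ℝ := ε * m / 2 with hδdef
  have hδ : 0 < δ := by positivity
  set Φ : C(M, C(sphere (0 : EuclideanSpace ℝ (Fin k)) 1, ℝ)) := F.curry with hΦdef
  have hΦ : ∀ x s, Φ x s = H0 (x, ↑s) := fun x s => rfl
  -- nice approximations at every point
  have hch : ∀ x : M, ∃ G : EuclideanSpace ℝ (Fin k) → ℝ,
      ContDiffOn ℝ 1 G {0}ᶜ ∧ (∀ l : ℝ, 0 < l → ∀ t, G (l • t) = G t) ∧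
      ∀ s : sphere (0 : EuclideanSpace ℝ (Fin k)) 1, |G ↑s - H0 (x, ↑s)| < δ := by
    intro x
    obtain ⟨G, h1, h2, h3⟩ := nice_dense (Φ x) hδ
    exact ⟨G, h1, h2, fun s => by simpa [hΦ x s] using h3 s⟩
  choose G hG1 hG2 hG3 using hch
  -- finite cover
  set U : M → Set M := fun x => {y | dist (Φ y) (Φ x) < δ} with hUdef
  have hUopen : ∀ x, IsOpen (U x) :=
    fun x => isOpen_lt (Continuous.dist Φ.continuous continuous_const) continuous_const
  have hUmem : ∀ x, x ∈ U x := by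
    intro x
    simp only [hUdef, Set.mem_setOf_eq, dist_self]
    exact hδ
  obtain ⟨fs, hfs⟩ := isCompact_univ.elim_finite_subcover U hUopen
    (fun y _ => Set.mem_iUnion.mpr ⟨y, hUmem y⟩)
  -- partition of unity
  set ψ : M → M → ℝ := fun i y => max (δ - dist (Φ y) (Φ i)) 0 with hψdef
  have hψcont : ∀ i, Continuous (ψ i) :=
    fun i => (continuous_const.sub (Φ.continuous.dist continuous_const)).max continuous_const
  have hψnn : ∀ i y, 0 ≤ ψ i y := fun i y => le_max_right _ _
  set W : M → ℝ := fun y => ∑ i ∈ fs, ψ i y with hWdef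
  have hWcont : Continuous W := continuous_finset_sum _ (fun i _ => hψcont i)
  have hWpos : ∀ y, 0 < W y := by
    intro y
    obtain ⟨i, hi, hyi⟩ := Set.mem_iUnion₂.mp (hfs (Set.mem_univ y))
    refine Finset.sum_pos' (fun j _ => hψnn j y) ⟨i, hi, ?_⟩
    have h1 : 0 < δ - dist (Φ y) (Φ i) := sub_pos.mpr hyi
    exact lt_of_lt_of_le h1 (le_max_left _ _)
  set w : M → M → ℝ := fun i y => ψ i y / W y with hwdef
  have hwcont : ∀ i, Continuous (w i) :=
    fun i => (hψcont i).div hWcont (fun y => (hWpos y).ne')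
  have hwnn : ∀ i y, 0 ≤ w i y := fun i y => div_nonneg (hψnn i y) (hWpos y).le
  have hwsum : ∀ y, ∑ i ∈ fs, w i y = 1 := by
    intro y
    rw [hwdef]
    simp only
    rw [← Finset.sum_div]
    exact div_self (hWpos y).ne'
  have hwsupp : ∀ i y, w i y ≠ 0 → dist (Φ y) (Φ i) < δ := by
    intro i y h
    by_contra hge
    push_neg at hge
    apply h
    have : ψ i y = 0 := max_eq_right (sub_nonpos.mpr hge)
    simp [hwdef, this]
  -- the extended nice functions
  have hGhom : ∀ i (l : ℝ), 0 < l → ∀ t,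
      ‖l • t‖ ^ p * G i (l • t) = l ^ p * (‖t‖ ^ p * G i t) := by
    intro i l hl t
    rw [normPosSmul hl, Real.mul_rpow hl.le (norm_nonneg t), hG2 i l hl t]
    ring
  have hGC1 : ∀ i, ContDiff ℝ 1 (fun t : EuclideanSpace ℝ (Fin k) => ‖t‖ ^ p * G i t) := by
    intro i
    apply homC1 hp
    · apply ContDiffOn.mul _ (hG1 i)
      intro t ht
      exact ((Real.contDiffAt_rpow_const_of_ne
        (norm_ne_zero_iff.mpr ht)).comp t (contDiffAt_id.norm ℝ ht)).contDiffWithinAt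
    · exact fun l hl t => hGhom i l hl t
  -- the candidate
  set H : M × EuclideanSpace ℝ (Fin k) → ℝ :=
    fun q => ∑ i ∈ fs, w i q.1 * (‖q.2‖ ^ p * G i q.2) with hHdef
  have hHcont : Continuous H := by
    apply continuous_finset_sum
    intro i _
    exact ((hwcont i).comp continuous_fst).mul ((hGC1 i).continuous.comp continuous_snd)
  have hHC1 : ∀ x : M, ContDiff ℝ 1 (fun t => H (x, t)) := by
    intro x
    apply ContDiff.sum
    intro i _
    show ContDiff ℝ 1 fun t : EuclideanSpace ℝ (Fin k) => w i x * (‖t‖ ^ p * G i t)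
    exact contDiff_const.mul (hGC1 i)
  have hHhom : ∀ (x : M) (l : ℝ), 0 < l → ∀ t, H (x, l • t) = l ^ p * H (x, t) := by
    intro x l hl t
    simp only [hHdef]
    rw [Finset.mul_sum]
    exact Finset.sum_congr rfl fun i _ => by rw [hGhom i l hl t]; ring
  have hHzero : ∀ x, H (x, 0) = 0 := by
    intro x
    simp only [hHdef]
    apply Finset.sum_eq_zero
    intro i _
    simp [Real.zero_rpow hp0.ne']
  -- key estimate on the sphere
  have hkey : ∀ x (s : sphere (0 : EuclideanSpace ℝ (Fin k)) 1),
      |H (x, ↑s) - H0 (x, ↑s)| ≤ ε * H0 (x, ↑s) := by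
    intro x s
    have hn1 : ‖(s : EuclideanSpace ℝ (Fin k))‖ = 1 := sphere_norm_one s
    have hHs : H (x, ↑s) = ∑ i ∈ fs, w i x * G i ↑s := by
      simp only [hHdef]
      exact Finset.sum_congr rfl fun i _ => by rw [hn1, Real.one_rpow, one_mul]
    have hsplit : ∑ i ∈ fs, w i x * (G i ↑s - H0 (x, ↑s))
        = (∑ i ∈ fs, w i x * G i ↑s) - H0 (x, ↑s) := by
      simp only [mul_sub]
      rw [Finset.sum_sub_distrib, ← Finset.sum_mul, hwsum x, one_mul]
    rw [hHs, ← hsplit]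
    calc |∑ i ∈ fs, w i x * (G i ↑s - H0 (x, ↑s))|
        ≤ ∑ i ∈ fs, |w i x * (G i ↑s - H0 (x, ↑s))| := Finset.abs_sum_le_sum_abs _ _
      _ ≤ ∑ i ∈ fs, w i x * (ε * H0 (x, ↑s)) := by
          apply Finset.sum_le_sum
          intro i _
          rw [abs_mul, abs_of_nonneg (hwnn i x)]
          rcases eq_or_ne (w i x) 0 with h0 | h0
          · simp [h0]
          · apply mul_le_mul_of_nonneg_left _ (hwnn i x)
            have hd := hwsupp i x h0
            have h1 : |G i ↑s - H0 (i, ↑s)| < δ := hG3 i s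
            have h2 : |H0 (i, ↑s) - H0 (x, ↑s)| ≤ dist (Φ x) (Φ i) := by
              have h := ContinuousMap.norm_coe_le_norm (Φ i - Φ x) s
              rw [ContinuousMap.sub_apply] at h
              rw [dist_comm, dist_eq_norm]
              simpa [hΦ] using h
            have h4 : ε * m ≤ ε * H0 (x, ↑s) :=
              mul_le_mul_of_nonneg_left (hmle x s) hε0.le
            calc |G i ↑s - H0 (x, ↑s)|
                ≤ |G i ↑s - H0 (i, ↑s)| + |H0 (i, ↑s) - H0 (x, ↑s)| := abs_sub_le _ _ _
              _ ≤ δ + δ := add_le_add h1.le (h2.trans hd.le)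
              _ = ε * m := by rw [hδdef]; ring
              _ ≤ ε * H0 (x, ↑s) := h4
      _ = ε * H0 (x, ↑s) := by rw [← Finset.sum_mul, hwsum x, one_mul]
  -- global bounds
  have hbound : ∀ x t, (1 - ε) * H0 (x, t) ≤ H (x, t) ∧ H (x, t) ≤ (1 + ε) * H0 (x, t) := by
    intro x t
    rcases eq_or_ne t 0 with rfl | ht
    · rw [hHzero x, hH00 x]
      norm_num
    · have hnt : 0 < ‖t‖ := norm_pos_iff.mpr ht
      set s : sphere (0 : EuclideanSpace ℝ (Fin k)) 1 :=
        ⟨‖t‖⁻¹ • t, by rw [mem_sphere_iff_norm, sub_zero]; exact norm_smul_inv_norm ht⟩ with hsdef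
      have hts : t = ‖t‖ • (s : EuclideanSpace ℝ (Fin k)) := by
        rw [hsdef]
        simp only
        rw [smul_smul, mul_inv_cancel₀ hnt.ne', one_smul]
      have h1 := hkey x s
      have hH0pos : 0 < H0 (x, ↑s) := hpos x _ (sphere_ne_zero s)
      rw [abs_le] at h1
      have hA1 : (1 - ε) * H0 (x, ↑s) ≤ H (x, ↑s) := by nlinarith [h1.1]
      have hA2 : H (x, ↑s) ≤ (1 + ε) * H0 (x, ↑s) := by nlinarith [h1.2]
      have hpow : (0:ℝ) < ‖t‖ ^ p := Real.rpow_pos_of_pos hnt p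
      have e0 : H0 (x, t) = ‖t‖ ^ p * H0 (x, ↑s) := by
        conv_lhs => rw [hts]
        exact hhom x ‖t‖ hnt ↑s
      have e1 : H (x, t) = ‖t‖ ^ p * H (x, ↑s) := by
        conv_lhs => rw [hts]
        exact hHhom x ‖t‖ hnt ↑s
      rw [e0, e1]
      constructor
      · nlinarith [hA1]
      · nlinarith [hA2]
  have hHpos : ∀ x t, t ≠ 0 → 0 < H (x, t) := by
    intro x t ht
    have h := (hbound x t).1
    have h2 := hpos x t ht
    nlinarith
  exact ⟨H, hHcont, hHpos, hHC1, hHhom, hbound⟩
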